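/- For a concrete arena A, two alternating prestrategies σ, τ on A satisfy σ ≈ τ (the AJM-style uniformity bisimulation equivalence) if and only if their pointer collapses coincide: 𝒫(σ) = 𝒫(τ). -/

import Mathlib

set_option autoImplicit false

/-- Immediate causality `a ⋗ b` for a relation `le`. -/
def immOf {α : Type} (le : α → α → Prop) (a b : α) : Prop :=
  le a b ∧ a ≠ b ∧ ∀ c, le a c → le c b → c = a ∨ c = b

/-- Configurations: finite, down-closed, consistent sets. -/
def ConfigOf {α : Type} (le conflict : α → α → Prop) (x : Set α) : Prop :=
  x.Finite ∧ (∀ e ∈ x, ∀ e', le e' e → e' ∈ x) ∧ ∀ e ∈ x, ∀ e' ∈ x, ¬ conflict e e'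

/-- Minimality for a causal dependency relation. -/
def MinimalOf {α : Type} (le : α → α → Prop) (a : α) : Prop := ∀ a', le a' a → a' = a

/-- A set of pairs is the graph of a bijection between its domain and codomain. -/
def IsBijGraph {α : Type} (θ : Set (α × α)) : Prop :=
  ∀ p ∈ θ, ∀ q ∈ θ, ((p : α × α).1 = q.1 ↔ p.2 = q.2)

def symDom {α : Type} (θ : Set (α × α)) : Set α := Prod.fst '' θ

def symCod {α : Type} (θ : Set (α × α)) : Set α := Prod.snd '' θ

/-- An arena with symmetry: an alternating, forestial, race-free event structure
with polarities (`true` = Player `+`, `false` = Opponent `−`), equipped with an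
isomorphism family `Sym` of (graphs of) polarity-preserving bijections between
configurations, closed under identities, inverse, composition, restriction and
extension. -/
structure ArenaS (α : Type) where
  le : α → α → Prop
  conflict : α → α → Prop
  pol : α → Bool
  le_refl : ∀ e, le e e
  le_trans : ∀ {a b c : α}, le a b → le b c → le a c
  le_antisymm : ∀ {a b : α}, le a b → le b a → a = b
  finite_causes : ∀ e : α, Set.Finite {e' | le e' e}
  conflict_irrefl : ∀ e, ¬ conflict e e
  conflict_symm : ∀ {a b : α}, conflict a b → conflict b a
  conflict_inherit : ∀ {a b b' : α}, conflict a b → le b b' → conflict a b'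
  alternating : ∀ {a b : α}, immOf le a b → pol a ≠ pol b
  forestial : ∀ {a1 a2 a : α}, le a1 a → le a2 a → le a1 a2 ∨ le a2 a1
  race_free : ∀ {a1 a2 : α}, conflict a1 a2 →
    (∀ a1' a2', le a1' a1 → le a2' a2 → conflict a1' a2' → a1' = a1 ∧ a2' = a2) →
    pol a1 = pol a2
  Sym : Set (Set (α × α))
  sym_graph : ∀ θ ∈ Sym, IsBijGraph θ
  sym_dom : ∀ θ ∈ Sym, ConfigOf le conflict (symDom θ)
  sym_cod : ∀ θ ∈ Sym, ConfigOf le conflict (symCod θ)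
  sym_pol : ∀ θ ∈ Sym, ∀ p ∈ θ, pol (p : α × α).1 = pol p.2
  sym_id : ∀ x : Set α, ConfigOf le conflict x → {p : α × α | p.1 ∈ x ∧ p.2 = p.1} ∈ Sym
  sym_inv : ∀ θ ∈ Sym, Prod.swap '' θ ∈ Sym
  sym_comp : ∀ θ ∈ Sym, ∀ θ' ∈ Sym, symCod θ = symDom θ' →
    {p : α × α | ∃ b, (p.1, b) ∈ θ ∧ (b, p.2) ∈ θ'} ∈ Sym
  sym_restrict : ∀ θ ∈ Sym, ∀ x : Set α, ConfigOf le conflict x → x ⊆ symDom θ →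
    ∃ θ' ∈ Sym, θ' ⊆ θ ∧ symDom θ' = x
  sym_ext : ∀ θ ∈ Sym, ∀ x : Set α, ConfigOf le conflict x → symDom θ ⊆ x →
    ∃ θ' ∈ Sym, θ ⊆ θ' ∧ symDom θ' = x

/-- An alternating play: valid, non-repetitive, alternating, negative start. -/
def AltPlayOf {α : Type} (le conflict : α → α → Prop) (pol : α → Bool) (s : List α) : Prop :=
  (∀ t, t <+: s → ConfigOf le conflict {a | a ∈ t}) ∧
  s.Nodup ∧
  (∀ (i : ℕ) (a b : α), s[i]? = some a → s[i + 1]? = some b → pol a ≠ pol b) ∧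
  (∀ a : α, s[0]? = some a → pol a = false)

/-- The pointwise pairing of the length-`k` prefixes of two sequences. -/
def pairingUpTo {α : Type} (s t : List α) (k : ℕ) : Set (α × α) :=
  {p | ∃ i < k, s[i]? = some p.1 ∧ t[i]? = some p.2}

/-- Two plays are symmetric when they have the same length and the pointwise
pairing of each pair of prefixes is a symmetry. -/
def PlaySymOf {α : Type} (Sym : Set (Set (α × α))) (s t : List α) : Prop :=
  s.length = t.length ∧ ∀ k ≤ s.length, pairingUpTo s t k ∈ Sym

/-- A meager arena: a forestial alternating partial order with polarities,
without conflict or symmetry. -/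
structure Meager (β : Type) where
  le : β → β → Prop
  pol : β → Bool
  le_refl : ∀ e, le e e
  le_trans : ∀ {a b c : β}, le a b → le b c → le a c
  le_antisymm : ∀ {a b : β}, le a b → le b a → a = b
  alternating : ∀ {a b : β}, immOf le a b → pol a ≠ pol b
  forestial : ∀ {a1 a2 a : β}, le a1 a → le a2 a → le a1 a2 ∨ le a2 a1

/-- A concrete arena `(A, A⁰, lbl)`: an arena with symmetry `A`, a meager arena
`M = A⁰`, and a polarity-preserving label function which is rigid (preserves
minimality and immediate causality), locally pointed, and transparent (a bijection
between configurations is a symmetry iff it is an order-isomorphism preserving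
labels). -/
structure Concrete (α β : Type) where
  A : ArenaS α
  M : Meager β
  lbl : α → β
  lbl_pol : ∀ a : α, M.pol (lbl a) = A.pol a
  locally_pointed : ∀ x : Set α, ConfigOf A.le A.conflict x → ∀ a ∈ x, ∀ a' ∈ x,
      MinimalOf A.le a → MinimalOf A.le a' → A.pol a = A.pol a' → a = a'
  rigid_min : ∀ a : α, MinimalOf A.le a → MinimalOf M.le (lbl a)
  rigid_imm : ∀ a b : α, immOf A.le a b → immOf M.le (lbl a) (lbl b)
  transparent : ∀ θ : Set (α × α), IsBijGraph θ →
      ConfigOf A.le A.conflict (symDom θ) → ConfigOf A.le A.conflict (symCod θ) →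
      (θ ∈ A.Sym ↔
        ((∀ p ∈ θ, ∀ q ∈ θ, (A.le (p : α × α).1 (q : α × α).1 ↔ A.le p.2 q.2)) ∧
          ∀ p ∈ θ, lbl (p : α × α).1 = lbl p.2))

-- The pointer annotation obtained from the arena's immediate causality: `ptrOf le
-- s j` is an index `i < j` carrying the immediate causal predecessor of `s_j`
-- (when one exists).
open Classical in
noncomputable def ptrOf {α : Type} (le : α → α → Prop) (s : List α) (j : ℕ) : ℕ :=
  if h : ∃ i, i < j ∧ ∃ a b, s[i]? = some a ∧ s[j]? = some b ∧ immOf le a b then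
    h.choose
  else 0

/-- Two plays have the same image under the pointer collapse `𝒫`: equal label
sequences, and equal pointers at every non-minimal occurrence. -/
def PImageEq {α β : Type} (C : Concrete α β) (s t : List α) : Prop :=
  s.map C.lbl = t.map C.lbl ∧
  ∀ (j : ℕ) (a : α), s[j]? = some a → ¬ MinimalOf C.A.le a →
    ptrOf C.A.le s j = ptrOf C.A.le t j

/-- An alternating prestrategy: non-empty, prefix-closed, deterministic set of
alternating plays. -/
def PrestratOf {α : Type} (le conflict : α → α → Prop) (pol : α → Bool)
    (σ : Set (List α)) : Prop :=
  ([] ∈ σ) ∧ (∀ s t : List α, s <+: t → t ∈ σ → s ∈ σ) ∧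
  (∀ s ∈ σ, AltPlayOf le conflict pol s) ∧
  (∀ (s : List α) (a b : α), pol a = true → pol b = true →
      s ++ [a] ∈ σ → s ++ [b] ∈ σ → a = b)

/-- The AJM-style uniformity bisimulation `σ ≈ τ`: positive extensions on one side
can be matched by symmetric positive extensions on the other (→/←-simulation), and
symmetric negative extensions are transferred (→/←-receptivity). -/
def UnifOf {α : Type} (Sym : Set (Set (α × α))) (pol : α → Bool)
    (σ τ : Set (List α)) : Prop :=
  (∀ (s : List α) (a : α), pol a = true → s ++ [a] ∈ σ → ∀ t ∈ τ, PlaySymOf Sym s t →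
      ∃ b, pol b = true ∧ t ++ [b] ∈ τ ∧ PlaySymOf Sym (s ++ [a]) (t ++ [b])) ∧
  (∀ (t : List α) (b : α), pol b = true → t ++ [b] ∈ τ → ∀ s ∈ σ, PlaySymOf Sym s t →
      ∃ a, pol a = true ∧ s ++ [a] ∈ σ ∧ PlaySymOf Sym (s ++ [a]) (t ++ [b])) ∧
  (∀ (s t : List α) (a b : α), pol a = false → s ++ [a] ∈ σ → t ∈ τ →
      PlaySymOf Sym (s ++ [a]) (t ++ [b]) → t ++ [b] ∈ τ) ∧
  (∀ (s t : List α) (a b : α), pol b = false → t ++ [b] ∈ τ → s ∈ σ →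
      PlaySymOf Sym (s ++ [a]) (t ++ [b]) → s ++ [a] ∈ σ)
section AuxOrder
variable {α β : Type}

private lemma chainMax (le : α → α → Prop)
    (hanti : ∀ {a b : α}, le a b → le b a → a = b)
    (htrans : ∀ {a b c : α}, le a b → le b c → le a c) :
    ∀ F : Finset α, F.Nonempty → (∀ x ∈ F, ∀ y ∈ F, le x y ∨ le y x) →
      ∃ m ∈ F, ∀ c ∈ F, le m c → c = m := by
  classical
  intro F
  induction F using Finset.induction_on with
  | empty => intro h; simp at h
  | @insert a F ha IH =>
    intro _ hcomp
    rcases F.eq_empty_or_nonempty with rfl | hFne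
    · refine ⟨a, by simp, ?_⟩
      intro c hc _
      simpa using hc
    · obtain ⟨m, hm, hmax⟩ := IH hFne (fun x hx y hy =>
        hcomp x (Finset.mem_insert_of_mem hx) y (Finset.mem_insert_of_mem hy))
      rcases hcomp a (Finset.mem_insert_self a F) m (Finset.mem_insert_of_mem hm)
        with ham | hma
      · refine ⟨m, Finset.mem_insert_of_mem hm, ?_⟩
        intro c hc hle
        rcases Finset.mem_insert.mp hc with rfl | hc
        · exact (hanti hle ham).symm
        · exact hmax c hc hle
      · refine ⟨a, Finset.mem_insert_self a F, ?_⟩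
        intro c hc hle
        rcases Finset.mem_insert.mp hc with rfl | hc
        · rfl
        · have hcm : c = m := hmax c hc (htrans hma hle)
          subst hcm
          exact hanti hma hle

private lemma exists_imm_pred (A : ArenaS α) {b : α} (h : ¬ MinimalOf A.le b) :
    ∃ m, immOf A.le m b := by
  have hS : {e | A.le e b ∧ e ≠ b}.Finite :=
    (A.finite_causes b).subset (fun e he => he.1)
  have hne : {e | A.le e b ∧ e ≠ b}.Nonempty := by
    unfold MinimalOf at h
    push_neg at h
    obtain ⟨a', h1, h2⟩ := h
    exact ⟨a', h1, h2⟩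
  obtain ⟨m, hm, hmax⟩ := chainMax A.le (fun {x y} => A.le_antisymm)
    (fun {x y z} => A.le_trans) hS.toFinset
    (by rwa [Set.Finite.toFinset_nonempty])
    (fun x hx y hy =>
      A.forestial (hS.mem_toFinset.mp hx).1 (hS.mem_toFinset.mp hy).1)
  have hm' := hS.mem_toFinset.mp hm
  refine ⟨m, hm'.1, hm'.2, ?_⟩
  intro c h1 h2
  by_cases hc : c = b
  · right; exact hc
  · left
    exact hmax c (hS.mem_toFinset.mpr ⟨h2, hc⟩) h1

private lemma imm_pred_unique (A : ArenaS α) {m m' b : α}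
    (h1 : immOf A.le m b) (h2 : immOf A.le m' b) : m = m' := by
  rcases A.forestial h1.1 h2.1 with h | h
  · rcases h1.2.2 m' h h2.1 with he | he
    · exact he.symm
    · exact absurd he h2.2.1
  · rcases h2.2.2 m h h1.1 with he | he
    · exact he
    · exact absurd he h1.2.1

private lemma min_iff_lbl (C : Concrete α β) (a : α) :
    MinimalOf C.A.le a ↔ MinimalOf C.M.le (C.lbl a) := by
  constructor
  · exact C.rigid_min a
  · intro h
    by_contra hna
    obtain ⟨m, hm⟩ := exists_imm_pred C.A hna
    have h2 := C.rigid_imm m a hm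
    exact h2.2.1 (h _ h2.1)

private lemma nonmin_transfer (C : Concrete α β) {a b : α}
    (hl : C.lbl a = C.lbl b) (h : ¬ MinimalOf C.A.le a) : ¬ MinimalOf C.A.le b := by
  intro hb
  apply h
  rw [min_iff_lbl C a, hl]
  exact (min_iff_lbl C b).mp hb

private lemma getElem?_append_lt {l r : List α} {i : ℕ} (h : i < l.length) :
    (l ++ r)[i]? = l[i]? := by
  rw [List.getElem?_append, if_pos h]

private lemma prefix_getElem? {s t : List α} (h : t <+: s) {i : ℕ} {a : α}
    (hi : t[i]? = some a) : s[i]? = some a := by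
  obtain ⟨r, rfl⟩ := h
  rw [getElem?_append_lt (List.getElem?_eq_some_iff.mp hi).1]
  exact hi

private lemma play_prefix {A : ArenaS α} {s t : List α}
    (hp : AltPlayOf A.le A.conflict A.pol s) (h : t <+: s) :
    AltPlayOf A.le A.conflict A.pol t := by
  obtain ⟨hval, hnd, halt, hst⟩ := hp
  refine ⟨fun u hu => hval u (hu.trans h), List.Nodup.sublist h.sublist hnd, ?_, ?_⟩
  · intro i a b h1 h2
    exact halt i a b (prefix_getElem? h h1) (prefix_getElem? h h2)
  · intro a h1
    exact hst a (prefix_getElem? h h1)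

private lemma ptrOf_eq {A : ArenaS α} {s : List α} {j i : ℕ} {m b : α}
    (hnd : s.Nodup) (hb : s[j]? = some b) (hm : s[i]? = some m)
    (hij : i < j) (himm : immOf A.le m b) : ptrOf A.le s j = i := by
  have hex : ∃ i', i' < j ∧ ∃ a b', s[i']? = some a ∧ s[j]? = some b' ∧ immOf A.le a b' :=
    ⟨i, hij, m, b, hm, hb, himm⟩
  rw [ptrOf, dif_pos hex]
  obtain ⟨hlt, a, b', ha, hb', himm'⟩ := hex.choose_spec
  have hbb : b' = b := by
    rw [hb] at hb'
    exact (Option.some.inj hb').symm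
  subst hbb
  have ham : a = m := imm_pred_unique A himm' himm
  subst ham
  exact (List.getElem?_inj (List.getElem?_eq_some_iff.mp ha).1 hnd).mp (ha.trans hm.symm)

private lemma exists_imm_idx {A : ArenaS α} {s : List α} {j : ℕ} {b : α}
    (hp : AltPlayOf A.le A.conflict A.pol s) (hb : s[j]? = some b)
    (hmin : ¬ MinimalOf A.le b) :
    ∃ i, i < j ∧ ∃ m, s[i]? = some m ∧ immOf A.le m b := by
  obtain ⟨m, himm⟩ := exists_imm_pred A hmin
  have hcfg := hp.1 (s.take (j+1)) (List.take_prefix _ _)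
  have hbmem : b ∈ s.take (j+1) := by
    rw [List.mem_iff_getElem?]
    exact ⟨j, by rw [List.getElem?_take, if_pos (Nat.lt_succ_self j)]; exact hb⟩
  have hmmem : m ∈ s.take (j+1) := hcfg.2.1 b hbmem m himm.1
  obtain ⟨i, hi⟩ := List.mem_iff_getElem?.mp hmmem
  rw [List.getElem?_take] at hi
  by_cases hik : i < j + 1
  · rw [if_pos hik] at hi
    have hij : i ≠ j := by
      intro he
      subst he
      rw [hb] at hi
      exact himm.2.1 (Option.some.inj hi).symm
    exact ⟨i, by omega, m, hi, himm⟩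
  · rw [if_neg hik] at hi
    exact absurd hi (by simp)

private lemma some_getElem {s : List α} {i : ℕ} (h : i < s.length) :
    ∃ a, s[i]? = some a := ⟨s[i], List.getElem?_eq_getElem h⟩

private lemma bij_pairing {s t : List α} (hs : s.Nodup) (ht : t.Nodup) (k : ℕ) :
    IsBijGraph (pairingUpTo s t k) := by
  rintro ⟨a, a'⟩ ⟨i, hik, h1, h2⟩ ⟨b, b'⟩ ⟨j, hjk, h3, h4⟩
  dsimp only
  constructor
  · intro he
    subst he
    have hij : i = j :=
      (List.getElem?_inj (List.getElem?_eq_some_iff.mp h1).1 hs).mp (h1.trans h3.symm)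
    subst hij
    rw [h2] at h4
    exact Option.some.inj h4
  · intro he
    subst he
    have hij : i = j :=
      (List.getElem?_inj (List.getElem?_eq_some_iff.mp h2).1 ht).mp (h2.trans h4.symm)
    subst hij
    rw [h1] at h3
    exact Option.some.inj h3

private lemma symDom_pairing {s t : List α} {k : ℕ} (hk : k ≤ s.length)
    (hk' : k ≤ t.length) :
    symDom (pairingUpTo s t k) = {a | a ∈ s.take k} := by
  ext a
  simp only [symDom, Set.mem_image, Set.mem_setOf_eq, List.mem_iff_getElem?]
  constructor
  · rintro ⟨p, ⟨i, hik, h1, h2⟩, rfl⟩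
    exact ⟨i, by rw [List.getElem?_take, if_pos hik]; exact h1⟩
  · rintro ⟨i, hi⟩
    rw [List.getElem?_take] at hi
    by_cases hik : i < k
    · rw [if_pos hik] at hi
      obtain ⟨c, hc⟩ := some_getElem (lt_of_lt_of_le hik hk')
      exact ⟨(a, c), ⟨i, hik, hi, hc⟩, rfl⟩
    · rw [if_neg hik] at hi
      exact absurd hi (by simp)

private lemma symCod_pairing {s t : List α} {k : ℕ} (hk : k ≤ s.length)
    (hk' : k ≤ t.length) :
    symCod (pairingUpTo s t k) = {a | a ∈ t.take k} := by
  ext a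
  simp only [symCod, Set.mem_image, Set.mem_setOf_eq, List.mem_iff_getElem?]
  constructor
  · rintro ⟨p, ⟨i, hik, h1, h2⟩, rfl⟩
    exact ⟨i, by rw [List.getElem?_take, if_pos hik]; exact h2⟩
  · rintro ⟨i, hi⟩
    rw [List.getElem?_take] at hi
    by_cases hik : i < k
    · rw [if_pos hik] at hi
      obtain ⟨c, hc⟩ := some_getElem (lt_of_lt_of_le hik hk)
      exact ⟨(c, a), ⟨i, hik, hc, hi⟩, rfl⟩
    · rw [if_neg hik] at hi
      exact absurd hi (by simp)

private lemma pairing_snoc {s t : List α} (h : s.length = t.length) (a b : α)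
    {k : ℕ} (hk : k ≤ s.length) :
    pairingUpTo (s ++ [a]) (t ++ [b]) k = pairingUpTo s t k := by
  ext p
  constructor
  · rintro ⟨i, hik, h1, h2⟩
    have his : i < s.length := lt_of_lt_of_le hik hk
    rw [getElem?_append_lt his] at h1
    rw [getElem?_append_lt (h ▸ his)] at h2
    exact ⟨i, hik, h1, h2⟩
  · rintro ⟨i, hik, h1, h2⟩
    have his : i < s.length := lt_of_lt_of_le hik hk
    exact ⟨i, hik, by rw [getElem?_append_lt his]; exact h1,
      by rw [getElem?_append_lt (h ▸ his)]; exact h2⟩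

private lemma pairing_snoc_last {s t : List α} (h : s.length = t.length) (a b : α) :
    pairingUpTo (s ++ [a]) (t ++ [b]) (s.length + 1) =
      pairingUpTo s t s.length ∪ {(a, b)} := by
  ext p
  constructor
  · rintro ⟨i, hik, h1, h2⟩
    by_cases his : i < s.length
    · rw [getElem?_append_lt his] at h1
      rw [getElem?_append_lt (h ▸ his)] at h2
      exact Or.inl ⟨i, his, h1, h2⟩
    · have : i = s.length := by omega
      subst this
      rw [List.getElem?_concat_length] at h1
      rw [h, List.getElem?_concat_length] at h2
      right
      have : p = (p.1, p.2) := rfl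
      rw [Set.mem_singleton_iff, this, ← Option.some.inj h1, ← Option.some.inj h2]
  · rintro (⟨i, hik, h1, h2⟩ | hp)
    · exact ⟨i, by omega, by rw [getElem?_append_lt hik]; exact h1,
        by rw [getElem?_append_lt (h ▸ hik)]; exact h2⟩
    · rw [Set.mem_singleton_iff] at hp
      subst hp
      exact ⟨s.length, Nat.lt_succ_self _, List.getElem?_concat_length,
        by rw [h, List.getElem?_concat_length]⟩

private lemma playsym_symm {A : ArenaS α} {s t : List α}
    (h : PlaySymOf A.Sym s t) : PlaySymOf A.Sym t s := by
  refine ⟨h.1.symm, fun k hk => ?_⟩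
  have hk' : k ≤ s.length := h.1 ▸ hk
  have hmem := A.sym_inv _ (h.2 k hk')
  have heq : pairingUpTo t s k = Prod.swap '' pairingUpTo s t k := by
    ext ⟨x, y⟩
    constructor
    · rintro ⟨i, hik, h1, h2⟩
      exact ⟨(y, x), ⟨i, hik, h2, h1⟩, rfl⟩
    · rintro ⟨⟨u, v⟩, ⟨i, hik, h1, h2⟩, he⟩
      have hux : v = x := congrArg Prod.fst he
      have hvy : u = y := congrArg Prod.snd he
      subst hux; subst hvy
      exact ⟨i, hik, h2, h1⟩
  rw [heq]
  exact hmem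

private lemma playsym_trans {A : ArenaS α} {s t u : List α} (hnd : t.Nodup)
    (h1 : PlaySymOf A.Sym s t) (h2 : PlaySymOf A.Sym t u) : PlaySymOf A.Sym s u := by
  refine ⟨h1.1.trans h2.1, fun k hk => ?_⟩
  have hkt : k ≤ t.length := h1.1 ▸ hk
  have hku : k ≤ u.length := h2.1 ▸ hkt
  have hcd : symCod (pairingUpTo s t k) = symDom (pairingUpTo t u k) := by
    rw [symCod_pairing hk hkt, symDom_pairing hkt hku]
  have hmem := A.sym_comp _ (h1.2 k hk) _ (h2.2 k hkt) hcd
  have heq : {p : α × α | ∃ b, (p.1, b) ∈ pairingUpTo s t k ∧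
      (b, p.2) ∈ pairingUpTo t u k} = pairingUpTo s u k := by
    ext ⟨x, y⟩
    constructor
    · rintro ⟨b, ⟨i, hik, hi1, hi2⟩, ⟨j, hjk, hj1, hj2⟩⟩
      have hij : i = j :=
        (List.getElem?_inj (List.getElem?_eq_some_iff.mp hi2).1 hnd).mp (hi2.trans hj1.symm)
      subst hij
      exact ⟨i, hik, hi1, hj2⟩
    · rintro ⟨i, hik, hi1, hi2⟩
      obtain ⟨c, hc⟩ := some_getElem (lt_of_lt_of_le hik hkt)
      exact ⟨c, ⟨i, hik, hi1, hc⟩, ⟨i, hik, hc, hi2⟩⟩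
  rw [← heq]
  exact hmem

private lemma playsym_restrict {A : ArenaS α} {s t : List α} {a b : α}
    (h : PlaySymOf A.Sym (s ++ [a]) (t ++ [b])) : PlaySymOf A.Sym s t := by
  have hlen : s.length = t.length := by
    have := h.1
    simpa using this
  refine ⟨hlen, fun k hk => ?_⟩
  rw [← pairing_snoc hlen a b hk]
  exact h.2 k (by simp; omega)

private lemma playsym_snoc_pol {A : ArenaS α} {s t : List α} {a b : α}
    (h : PlaySymOf A.Sym (s ++ [a]) (t ++ [b])) : A.pol a = A.pol b := by
  have hlen : s.length = t.length := by
    have := h.1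
    simpa using this
  have hmem := h.2 (s.length + 1) (by simp)
  have hab : (a, b) ∈ pairingUpTo (s ++ [a]) (t ++ [b]) (s.length + 1) :=
    ⟨s.length, Nat.lt_succ_self _, List.getElem?_concat_length,
      by rw [hlen, List.getElem?_concat_length]⟩
  exact A.sym_pol _ hmem _ hab

private lemma pimage_length {C : Concrete α β} {s t : List α}
    (h : PImageEq C s t) : s.length = t.length := by
  have := congrArg List.length h.1
  simpa using this

private lemma lbl_at {C : Concrete α β} {s t : List α}
    (h : s.map C.lbl = t.map C.lbl) {i : ℕ} {a b : α}
    (ha : s[i]? = some a) (hb : t[i]? = some b) : C.lbl a = C.lbl b := by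
  have h1 : (s.map C.lbl)[i]? = some (C.lbl a) := by
    rw [List.getElem?_map, ha]; rfl
  have h2 : (t.map C.lbl)[i]? = some (C.lbl b) := by
    rw [List.getElem?_map, hb]; rfl
  rw [h, h2] at h1
  exact (Option.some.inj h1).symm

private lemma pimage_symm (C : Concrete α β) {s t : List α}
    (h : PImageEq C s t) : PImageEq C t s := by
  refine ⟨h.1.symm, ?_⟩
  intro j a hta hna
  have hj : j < s.length := by
    rw [pimage_length h]
    exact (List.getElem?_eq_some_iff.mp hta).1
  obtain ⟨a', hsa⟩ := some_getElem hj
  have hlbl : C.lbl a' = C.lbl a := lbl_at h.1 hsa hta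
  have hna' : ¬ MinimalOf C.A.le a' := nonmin_transfer C hlbl.symm hna
  exact (h.2 j a' hsa hna').symm

private lemma le_transfer (C : Concrete α β) {s t : List α}
    (hps : AltPlayOf C.A.le C.A.conflict C.A.pol s)
    (hpt : AltPlayOf C.A.le C.A.conflict C.A.pol t)
    (h : PImageEq C s t) :
    ∀ (j i : ℕ) (a b a' b' : α), s[i]? = some a → s[j]? = some b →
      t[i]? = some a' → t[j]? = some b' → C.A.le a b → C.A.le a' b' := by
  intro j
  induction j using Nat.strong_induction_on with
  | _ j IH =>
    intro i a b a' b' hsa hsb hta htb hab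
    by_cases habe : a = b
    · subst habe
      have hij : i = j :=
        (List.getElem?_inj (List.getElem?_eq_some_iff.mp hsa).1 hps.2.1).mp (hsa.trans hsb.symm)
      subst hij
      rw [hta] at htb
      rw [Option.some.inj htb]
      exact C.A.le_refl _
    · have hbmin : ¬ MinimalOf C.A.le b := fun hm => habe (hm a hab)
      obtain ⟨p, hpj, m, hsm, himm⟩ := exists_imm_idx hps hsb hbmin
      have hptr : ptrOf C.A.le s j = p := ptrOf_eq hps.2.1 hsb hsm hpj himm
      have hptrt : ptrOf C.A.le t j = p := (h.2 j b hsb hbmin).symm.trans hptr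
      have hbmin' : ¬ MinimalOf C.A.le b' :=
        nonmin_transfer C (lbl_at h.1 hsb htb) hbmin
      obtain ⟨p', hp'j, m', htm', himm'⟩ := exists_imm_idx hpt htb hbmin'
      have hp'p : p' = p :=
        (ptrOf_eq hpt.2.1 htb htm' hp'j himm').symm.trans hptrt
      subst hp'p
      have ham : C.A.le a m := by
        rcases C.A.forestial hab himm.1 with h1 | h2
        · exact h1
        · rcases himm.2.2 a h2 hab with he | he
          · rw [he]; exact C.A.le_refl _
          · exact absurd he habe
      have := IH p' hpj i a m a' m' hsa hsm hta htm' ham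
      exact C.A.le_trans this himm'.1

private lemma playsym_of_pimage (C : Concrete α β) {s t : List α}
    (hps : AltPlayOf C.A.le C.A.conflict C.A.pol s)
    (hpt : AltPlayOf C.A.le C.A.conflict C.A.pol t)
    (h : PImageEq C s t) : PlaySymOf C.A.Sym s t := by
  have hlen : s.length = t.length := pimage_length h
  refine ⟨hlen, fun k hk => ?_⟩
  have hk' : k ≤ t.length := hlen ▸ hk
  have hbij : IsBijGraph (pairingUpTo s t k) := bij_pairing hps.2.1 hpt.2.1 k
  have hdomc : ConfigOf C.A.le C.A.conflict (symDom (pairingUpTo s t k)) := by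
    rw [symDom_pairing hk hk']
    exact hps.1 _ (List.take_prefix _ _)
  have hcodc : ConfigOf C.A.le C.A.conflict (symCod (pairingUpTo s t k)) := by
    rw [symCod_pairing hk hk']
    exact hpt.1 _ (List.take_prefix _ _)
  rw [C.transparent _ hbij hdomc hcodc]
  constructor
  · rintro ⟨x, x'⟩ ⟨i, hik, h1, h2⟩ ⟨y, y'⟩ ⟨j, hjk, h3, h4⟩
    dsimp only
    constructor
    · exact fun hle => le_transfer C hps hpt h j i _ _ _ _ h1 h3 h2 h4 hle
    · exact fun hle =>
        le_transfer C hpt hps (pimage_symm C h) j i _ _ _ _ h2 h4 h1 h3 hle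
  · rintro ⟨x, x'⟩ ⟨i, hik, h1, h2⟩
    exact lbl_at h.1 h1 h2

private lemma pimage_of_playsym (C : Concrete α β) {s t : List α}
    (hps : AltPlayOf C.A.le C.A.conflict C.A.pol s)
    (hpt : AltPlayOf C.A.le C.A.conflict C.A.pol t)
    (h : PlaySymOf C.A.Sym s t) : PImageEq C s t := by
  have hlen : s.length = t.length := h.1
  have hθ : pairingUpTo s t s.length ∈ C.A.Sym := h.2 _ le_rfl
  have hbij := C.A.sym_graph _ hθ
  have htrans := (C.transparent _ hbij (C.A.sym_dom _ hθ) (C.A.sym_cod _ hθ)).mp hθ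
  constructor
  · apply List.ext_getElem?
    intro i
    rw [List.getElem?_map, List.getElem?_map]
    by_cases hi : i < s.length
    · obtain ⟨x, hx⟩ := some_getElem hi
      obtain ⟨y, hy⟩ := some_getElem (hlen ▸ hi)
      rw [hx, hy]
      have hmem : (x, y) ∈ pairingUpTo s t s.length := ⟨i, hi, hx, hy⟩
      have := htrans.2 _ hmem
      simp only [Option.map_some]
      rw [this]
    · rw [List.getElem?_eq_none (l := s) (by omega),
        List.getElem?_eq_none (l := t) (by omega)]
  · intro j a hsa hna
    have hj : j < s.length := (List.getElem?_eq_some_iff.mp hsa).1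
    obtain ⟨i, hij, m, hsm, himm⟩ := exists_imm_idx hps hsa hna
    obtain ⟨b', htb⟩ := some_getElem (s := t) (hlen ▸ hj)
    obtain ⟨m', htm⟩ := some_getElem (s := t) (hlen ▸ (lt_trans hij hj))
    have hmem1 : (m, m') ∈ pairingUpTo s t s.length := ⟨i, lt_trans hij hj, hsm, htm⟩
    have hmem2 : (a, b') ∈ pairingUpTo s t s.length := ⟨j, hj, hsa, htb⟩
    have himm' : immOf C.A.le m' b' := by
      refine ⟨(htrans.1 _ hmem1 _ hmem2).mp himm.1, ?_, ?_⟩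
      · intro heq
        exact himm.2.1 ((hbij _ hmem1 _ hmem2).mpr heq)
      · intro c h1 h2
        have hbmem : b' ∈ {x | x ∈ t} := by
          rw [Set.mem_setOf_eq, List.mem_iff_getElem?]
          exact ⟨j, htb⟩
        have hcmem : c ∈ {x | x ∈ t} := (hpt.1 t (List.prefix_refl t)).2.1 b' hbmem c h2
        obtain ⟨kk, hck⟩ := List.mem_iff_getElem?.mp hcmem
        have hkk : kk < t.length := (List.getElem?_eq_some_iff.mp hck).1
        obtain ⟨d, hsd⟩ := some_getElem (s := s) (i := kk) (by omega)
        have hmem3 : (d, c) ∈ pairingUpTo s t s.length := ⟨kk, by omega, hsd, hck⟩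
        have h1' : C.A.le m d := (htrans.1 _ hmem1 _ hmem3).mpr h1
        have h2' : C.A.le d a := (htrans.1 _ hmem3 _ hmem2).mpr h2
        rcases himm.2.2 d h1' h2' with he | he
        · left
          exact (hbij _ hmem3 _ hmem1).mp he
        · right
          exact (hbij _ hmem3 _ hmem2).mp he
    rw [ptrOf_eq hps.2.1 hsa hsm hij himm, ptrOf_eq hpt.2.1 htb htm hij himm']

private lemma exists_concat {u : List α} (h : u ≠ []) : ∃ u' b, u = u' ++ [b] := by
  rcases List.eq_nil_or_concat u with rfl | ⟨L, b, h'⟩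
  · exact absurd rfl h
  · exact ⟨L, b, by simpa [List.concat_eq_append] using h'⟩

private lemma unif_symm (A : ArenaS α) {σ τ : Set (List α)}
    (h : UnifOf A.Sym A.pol σ τ) : UnifOf A.Sym A.pol τ σ := by
  obtain ⟨h1, h2, h3, h4⟩ := h
  refine ⟨?_, ?_, ?_, ?_⟩
  · intro t b hb htb s hs hsym
    obtain ⟨a, ha, hsa, hsym'⟩ := h2 t b hb htb s hs (playsym_symm hsym)
    exact ⟨a, ha, hsa, playsym_symm hsym'⟩
  · intro s a ha hsa t ht hsym
    obtain ⟨b, hb, htb, hsym'⟩ := h1 s a ha hsa t ht (playsym_symm hsym)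
    exact ⟨b, hb, htb, playsym_symm hsym'⟩
  · intro s t a b ha hsa ht hsym
    exact h4 t s b a ha hsa ht (playsym_symm hsym)
  · intro s t a b hb htb hs hsym
    exact h3 t s b a hb htb hs (playsym_symm hsym)

private lemma exists_partner (C : Concrete α β) {σ τ : Set (List α)}
    (hσ : PrestratOf C.A.le C.A.conflict C.A.pol σ)
    (hτ : PrestratOf C.A.le C.A.conflict C.A.pol τ)
    (h : UnifOf C.A.Sym C.A.pol σ τ) :
    ∀ s ∈ σ, ∃ t ∈ τ, PlaySymOf C.A.Sym s t := by
  intro s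
  induction s using List.reverseRecOn with
  | nil =>
    intro _
    refine ⟨[], hτ.1, rfl, fun k hk => ?_⟩
    rw [Nat.le_zero.mp hk]
    have hempty : pairingUpTo ([] : List α) [] 0 =
        {p : α × α | p.1 ∈ (∅ : Set α) ∧ p.2 = p.1} := by
      ext p
      constructor
      · rintro ⟨i, hik, _, _⟩
        omega
      · rintro ⟨hp, _⟩
        exact absurd hp (Set.notMem_empty _)
    rw [hempty]
    exact C.A.sym_id ∅ ⟨Set.finite_empty, by simp, by simp⟩
  | append_singleton s a IH =>
    intro hmem
    have hs : s ∈ σ := hσ.2.1 s (s ++ [a]) (List.prefix_append s [a]) hmem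
    obtain ⟨t, htτ, hsym⟩ := IH hs
    cases hpa : C.A.pol a with
    | true =>
      obtain ⟨b, hpb, htb, hsym'⟩ := h.1 s a hpa hmem t htτ hsym
      exact ⟨t ++ [b], htb, hsym'⟩
    | false =>
      have hlen := hsym.1
      have hθ : pairingUpTo s t s.length ∈ C.A.Sym := hsym.2 _ le_rfl
      have hplay : AltPlayOf C.A.le C.A.conflict C.A.pol (s ++ [a]) :=
        hσ.2.2.1 _ hmem
      have hx : ConfigOf C.A.le C.A.conflict {c | c ∈ s ++ [a]} :=
        hplay.1 _ (List.prefix_refl _)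
      have hsub : symDom (pairingUpTo s t s.length) ⊆ {c | c ∈ s ++ [a]} := by
        rw [symDom_pairing le_rfl hlen.le]
        intro c hc
        have hcs : c ∈ s := by simpa using hc
        simp [hcs]
      obtain ⟨θ', hθ'S, hsub', hdom'⟩ := C.A.sym_ext _ hθ _ hx hsub
      have hamem : a ∈ symDom θ' := by
        rw [hdom']
        simp
      obtain ⟨⟨a0, b⟩, hpmem, ha0⟩ := hamem
      dsimp only at ha0
      subst ha0
      have hbij' := C.A.sym_graph _ hθ'S
      have hkey : pairingUpTo (s ++ [a0]) (t ++ [b]) (s.length + 1) = θ' := by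
        ext ⟨x, y⟩
        constructor
        · rintro ⟨i, hik, h1, h2⟩
          by_cases his : i < s.length
          · rw [getElem?_append_lt his] at h1
            rw [getElem?_append_lt (hlen ▸ his)] at h2
            exact hsub' ⟨i, his, h1, h2⟩
          · have hie : i = s.length := by omega
            subst hie
            rw [List.getElem?_concat_length] at h1
            rw [hlen, List.getElem?_concat_length] at h2
            have hx0 : a0 = x := Option.some.inj h1
            have hy0 : b = y := Option.some.inj h2
            subst hx0
            subst hy0
            exact hpmem
        · intro hp
          have hx1 : x ∈ {c | c ∈ s ++ [a0]} := by
            rw [← hdom']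
            exact ⟨(x, y), hp, rfl⟩
          rcases List.mem_append.mp hx1 with hxs | hxa
          · obtain ⟨i, hi⟩ := List.mem_iff_getElem?.mp hxs
            have hilen : i < s.length := (List.getElem?_eq_some_iff.mp hi).1
            obtain ⟨c, hc⟩ := some_getElem (s := t) (hlen ▸ hilen)
            have hθi : (x, c) ∈ pairingUpTo s t s.length := ⟨i, hilen, hi, hc⟩
            have hyc : y = c := (hbij' _ hp _ (hsub' hθi)).mp rfl
            subst hyc
            exact ⟨i, by omega, by rw [getElem?_append_lt hilen]; exact hi,
              by rw [getElem?_append_lt (hlen ▸ hilen)]; exact hc⟩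
          · have hxa' : x = a0 := by simpa using hxa
            subst hxa'
            have hyb : y = b := (hbij' _ hp _ hpmem).mp rfl
            subst hyb
            exact ⟨s.length, Nat.lt_succ_self _, List.getElem?_concat_length,
              by rw [hlen, List.getElem?_concat_length]⟩
      have hsym2 : PlaySymOf C.A.Sym (s ++ [a0]) (t ++ [b]) := by
        refine ⟨by simp [hlen], fun k hk => ?_⟩
        simp only [List.length_append, List.length_cons, List.length_nil] at hk
        rcases Nat.lt_or_ge k (s.length + 1) with hlt | hge
        · have hk' : k ≤ s.length := by omega
          rw [pairing_snoc hlen a0 b hk']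
          exact hsym.2 k hk'
        · have hke : k = s.length + 1 := by omega
          rw [hke, hkey]
          exact hθ'S
      exact ⟨t ++ [b], h.2.2.1 s t a0 b hpa hmem htτ hsym2, hsym2⟩

private lemma sim_clause (C : Concrete α β) {σ τ : Set (List α)}
    (hσ : PrestratOf C.A.le C.A.conflict C.A.pol σ)
    (hτ : PrestratOf C.A.le C.A.conflict C.A.pol τ)
    (hτuni : UnifOf C.A.Sym C.A.pol τ τ)
    (H : ∀ s ∈ σ, ∃ t ∈ τ, PImageEq C s t) :
    ∀ (s : List α) (a : α), C.A.pol a = true → s ++ [a] ∈ σ → ∀ t ∈ τ,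
      PlaySymOf C.A.Sym s t →
      ∃ b, C.A.pol b = true ∧ t ++ [b] ∈ τ ∧
        PlaySymOf C.A.Sym (s ++ [a]) (t ++ [b]) := by
  intro s a hpa hmem t ht hst
  obtain ⟨u, huτ, hpi⟩ := H _ hmem
  have hplay_sa := hσ.2.2.1 _ hmem
  have hplay_u := hτ.2.2.1 _ huτ
  have hsymu : PlaySymOf C.A.Sym (s ++ [a]) u :=
    playsym_of_pimage C hplay_sa hplay_u hpi
  have hne : u ≠ [] := by
    intro he
    have := hsymu.1
    rw [he] at this
    simp at this
  obtain ⟨u', b', rfl⟩ := exists_concat hne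
  have hpb' : C.A.pol b' = true := (playsym_snoc_pol hsymu) ▸ hpa
  have hu'τ : u' ∈ τ := hτ.2.1 u' (u' ++ [b']) (List.prefix_append u' [b']) huτ
  have hsymsu' : PlaySymOf C.A.Sym s u' := playsym_restrict hsymu
  have hplay_s : AltPlayOf C.A.le C.A.conflict C.A.pol s :=
    play_prefix hplay_sa (List.prefix_append s [a])
  have hsymu't : PlaySymOf C.A.Sym u' t :=
    playsym_trans hplay_s.2.1 (playsym_symm hsymsu') hst
  obtain ⟨b, hpb, htb, hsym'⟩ := hτuni.1 u' b' hpb' huτ t ht hsymu't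
  exact ⟨b, hpb, htb, playsym_trans hplay_u.2.1 hsymu hsym'⟩

private lemma rec_clause (C : Concrete α β) {σ τ : Set (List α)}
    (hσ : PrestratOf C.A.le C.A.conflict C.A.pol σ)
    (hτ : PrestratOf C.A.le C.A.conflict C.A.pol τ)
    (hτuni : UnifOf C.A.Sym C.A.pol τ τ)
    (H : ∀ s ∈ σ, ∃ t ∈ τ, PImageEq C s t) :
    ∀ (s t : List α) (a b : α), C.A.pol a = false → s ++ [a] ∈ σ → t ∈ τ →
      PlaySymOf C.A.Sym (s ++ [a]) (t ++ [b]) → t ++ [b] ∈ τ := by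
  intro s t a b hpa hmem ht hsym
  obtain ⟨u, huτ, hpi⟩ := H _ hmem
  have hplay_sa := hσ.2.2.1 _ hmem
  have hplay_u := hτ.2.2.1 _ huτ
  have hsymu : PlaySymOf C.A.Sym (s ++ [a]) u :=
    playsym_of_pimage C hplay_sa hplay_u hpi
  have hne : u ≠ [] := by
    intro he
    have := hsymu.1
    rw [he] at this
    simp at this
  obtain ⟨u', b'', rfl⟩ := exists_concat hne
  have hpb'' : C.A.pol b'' = false := (playsym_snoc_pol hsymu) ▸ hpa
  have hu'τ : u' ∈ τ := hτ.2.1 u' (u' ++ [b'']) (List.prefix_append u' [b'']) huτ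
  have hsym2 : PlaySymOf C.A.Sym (u' ++ [b'']) (t ++ [b]) :=
    playsym_trans hplay_sa.2.1 (playsym_symm hsymu) hsym
  exact hτuni.2.2.1 u' t b'' b hpb'' huτ ht hsym2

end AuxOrder


/-- For a concrete arena, two (uniform) alternating prestrategies `σ, τ` satisfy
`σ ≈ τ` if and only if their pointer collapses coincide: `𝒫(σ) = 𝒫(τ)`. -/
theorem uniformity_iff_pointer_collapse {α β : Type} (C : Concrete α β)
    (σ τ : Set (List α))
    (hσ : PrestratOf C.A.le C.A.conflict C.A.pol σ)
    (hτ : PrestratOf C.A.le C.A.conflict C.A.pol τ)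
    (hσuni : UnifOf C.A.Sym C.A.pol σ σ)
    (hτuni : UnifOf C.A.Sym C.A.pol τ τ) :
    UnifOf C.A.Sym C.A.pol σ τ ↔
      ((∀ s ∈ σ, ∃ t ∈ τ, PImageEq C s t) ∧ (∀ t ∈ τ, ∃ s ∈ σ, PImageEq C s t)) := by
  constructor
  · intro h
    constructor
    · intro s hs
      obtain ⟨t, ht, hsym⟩ := exists_partner C hσ hτ h s hs
      exact ⟨t, ht, pimage_of_playsym C (hσ.2.2.1 s hs) (hτ.2.2.1 t ht) hsym⟩
    · intro t ht
      obtain ⟨s, hs, hsym⟩ := exists_partner C hτ hσ (unif_symm C.A h) t ht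
      exact ⟨s, hs,
        pimage_symm C (pimage_of_playsym C (hτ.2.2.1 t ht) (hσ.2.2.1 s hs) hsym)⟩
  · rintro ⟨H1, H2⟩
    have H2' : ∀ t ∈ τ, ∃ s ∈ σ, PImageEq C t s := by
      intro t ht
      obtain ⟨s, hs, hp⟩ := H2 t ht
      exact ⟨s, hs, pimage_symm C hp⟩
    refine ⟨sim_clause C hσ hτ hτuni H1, ?_, rec_clause C hσ hτ hτuni H1, ?_⟩
    · intro t b hpb htb s hs hsym
      obtain ⟨a, hpa, hsa, hsym'⟩ :=
        sim_clause C hτ hσ hσuni H2' t b hpb htb s hs (playsym_symm hsym)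
      exact ⟨a, hpa, hsa, playsym_symm hsym'⟩
    · intro s t a b hpb htb hs hsym
      exact rec_clause C hτ hσ hσuni H2' t s b a hpb htb hs (playsym_symm hsym)
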